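/- For any SAM F : ℝ^d × S → {subsets of ℝ^k} there exists a sequence of set-valued maps F^{(l)} : ℝ^d × S → {subsets of ℝ^k}, l ≥ 1, such that: each F^{(l)} is continuous with nonempty convex compact values; F(x,y,s) ⊆ F^{(l+1)}(x,y,s) ⊆ F^{(l)}(x,y,s) for every (x,y,s) and every l ≥ 1; there exist constants K^{(l)} > 0 with sup_{l≥1} K^{(l)} < ∞ such that sup{‖z‖ : z ∈ F^{(l)}(x,y,s)} ≤ K^{(l)}(1+‖(x,y)‖) for all (x,y,s); and ⋂_{l≥1} F^{(l)}(x,y,s) = F(x,y,s) for every (x,y,s). -/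

import Mathlib

open MeasureTheory Metric Filter Topology
open scoped Pointwise NNReal ENNReal RealInnerProductSpace

abbrev Euc (n : ℕ) : Type := EuclideanSpace ℝ (Fin n)

namespace SamAux

variable {d₁ d₂ k : ℕ} {S : Type} [MetricSpace S]

/-- support function of the values of `F` -/
noncomputable def sh (F : (Euc d₁ × Euc d₂) → S → Set (Euc k))
    (Q : (Euc d₁ × Euc d₂) × S) (f : Euc k →L[ℝ] ℝ) : ℝ :=
  sSup (f '' F Q.1 Q.2)

/-- sup-convolution regularization -/
noncomputable def sS (F : (Euc d₁ × Euc d₂) → S → Set (Euc k)) (K : ℝ) (l : ℕ)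
    (P : (Euc d₁ × Euc d₂) × S) (f : Euc k →L[ℝ] ℝ) : ℝ :=
  sSup (Set.range fun Q : (Euc d₁ × Euc d₂) × S => sh F Q f - (K + l + 1) * dist P Q)

noncomputable def sH (F : (Euc d₁ × Euc d₂) → S → Set (Euc k)) (K : ℝ) (l : ℕ)
    (P : (Euc d₁ × Euc d₂) × S) (f : Euc k →L[ℝ] ℝ) : ℝ :=
  sS F K l P f + 1 / (l + 1)

def sG (F : (Euc d₁ × Euc d₂) → S → Set (Euc k)) (K : ℝ) (l : ℕ)
    (P : (Euc d₁ × Euc d₂) × S) : Set (Euc k) :=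
  {z | ∀ f : Euc k →L[ℝ] ℝ, ‖f‖ ≤ 1 → f z ≤ sH F K l P f}

variable {F : (Euc d₁ × Euc d₂) → S → Set (Euc k)} {K : ℝ}

lemma image_bdd (hK : 0 < K) (hFbd : ∀ p s, ∀ z ∈ F p s, ‖z‖ ≤ K * (1 + ‖p‖))
    {Q : (Euc d₁ × Euc d₂) × S} {f : Euc k →L[ℝ] ℝ} (hf : ‖f‖ ≤ 1) :
    ∀ y ∈ f '' F Q.1 Q.2, y ≤ K * (1 + ‖Q.1‖) := by
  rintro y ⟨z, hz, rfl⟩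
  calc f z ≤ ‖f‖ * ‖z‖ := (le_abs_self _).trans (f.le_opNorm z)
    _ ≤ 1 * ‖z‖ := by
        have : (0:ℝ) ≤ ‖z‖ := norm_nonneg _
        nlinarith
    _ ≤ K * (1 + ‖Q.1‖) := by rw [one_mul]; exact hFbd _ _ _ hz

lemma le_sh (hK : 0 < K) (hFbd : ∀ p s, ∀ z ∈ F p s, ‖z‖ ≤ K * (1 + ‖p‖))
    {Q : (Euc d₁ × Euc d₂) × S} {f : Euc k →L[ℝ] ℝ} (hf : ‖f‖ ≤ 1)
    {z : Euc k} (hz : z ∈ F Q.1 Q.2) : f z ≤ sh F Q f :=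
  le_csSup ⟨K * (1 + ‖Q.1‖), image_bdd hK hFbd hf⟩ ⟨z, hz, rfl⟩

lemma sh_le (hK : 0 < K) (hFne : ∀ p s, (F p s).Nonempty)
    (hFbd : ∀ p s, ∀ z ∈ F p s, ‖z‖ ≤ K * (1 + ‖p‖))
    {Q : (Euc d₁ × Euc d₂) × S} {f : Euc k →L[ℝ] ℝ} (hf : ‖f‖ ≤ 1) :
    sh F Q f ≤ K * (1 + ‖Q.1‖) :=
  csSup_le ((hFne Q.1 Q.2).image f) (image_bdd hK hFbd hf)

lemma term_le (hK : 0 < K) (hFne : ∀ p s, (F p s).Nonempty)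
    (hFbd : ∀ p s, ∀ z ∈ F p s, ‖z‖ ≤ K * (1 + ‖p‖))
    {l : ℕ} {P Q : (Euc d₁ × Euc d₂) × S} {f : Euc k →L[ℝ] ℝ} (hf : ‖f‖ ≤ 1) :
    sh F Q f - (K + l + 1) * dist P Q ≤ K * (1 + ‖P.1‖) := by
  have h1 : sh F Q f ≤ K * (1 + ‖Q.1‖) := sh_le hK hFne hFbd hf
  have h2 : ‖Q.1‖ ≤ ‖P.1‖ + dist P Q := by
    have ha : ‖Q.1‖ ≤ ‖P.1‖ + dist P.1 Q.1 := by
      rw [dist_eq_norm]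
      calc ‖Q.1‖ = ‖P.1‖ + (‖Q.1‖ - ‖P.1‖) := by ring
        _ ≤ ‖P.1‖ + ‖Q.1 - P.1‖ := by linarith [norm_sub_norm_le Q.1 P.1]
        _ = ‖P.1‖ + ‖P.1 - Q.1‖ := by rw [norm_sub_rev]
    have h3 : dist P.1 Q.1 ≤ dist P Q := by
      rw [Prod.dist_eq]; exact le_max_left _ _
    linarith
  have hd : (0:ℝ) ≤ dist P Q := dist_nonneg
  have hl : (0:ℝ) ≤ (l:ℝ) := Nat.cast_nonneg l
  nlinarith

lemma range_bdd (hK : 0 < K) (hFne : ∀ p s, (F p s).Nonempty)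
    (hFbd : ∀ p s, ∀ z ∈ F p s, ‖z‖ ≤ K * (1 + ‖p‖))
    (l : ℕ) (P : (Euc d₁ × Euc d₂) × S) {f : Euc k →L[ℝ] ℝ} (hf : ‖f‖ ≤ 1) :
    BddAbove (Set.range fun Q : (Euc d₁ × Euc d₂) × S =>
      sh F Q f - (K + l + 1) * dist P Q) := by
  refine ⟨K * (1 + ‖P.1‖), ?_⟩
  rintro _ ⟨Q, rfl⟩
  exact term_le hK hFne hFbd hf

lemma sS_le (hK : 0 < K) (hFne : ∀ p s, (F p s).Nonempty)
    (hFbd : ∀ p s, ∀ z ∈ F p s, ‖z‖ ≤ K * (1 + ‖p‖))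
    (l : ℕ) (P : (Euc d₁ × Euc d₂) × S) {f : Euc k →L[ℝ] ℝ} (hf : ‖f‖ ≤ 1) :
    sS F K l P f ≤ K * (1 + ‖P.1‖) :=
  csSup_le ⟨_, ⟨P, rfl⟩⟩ (by rintro _ ⟨Q, rfl⟩; exact term_le hK hFne hFbd hf)

lemma sh_le_sS (hK : 0 < K) (hFne : ∀ p s, (F p s).Nonempty)
    (hFbd : ∀ p s, ∀ z ∈ F p s, ‖z‖ ≤ K * (1 + ‖p‖))
    (l : ℕ) (P : (Euc d₁ × Euc d₂) × S) {f : Euc k →L[ℝ] ℝ} (hf : ‖f‖ ≤ 1) :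
    sh F P f ≤ sS F K l P f := by
  have := le_csSup (range_bdd hK hFne hFbd l P hf) ⟨P, rfl⟩
  simpa [sS] using this

lemma sS_lip (hK : 0 < K) (hFne : ∀ p s, (F p s).Nonempty)
    (hFbd : ∀ p s, ∀ z ∈ F p s, ‖z‖ ≤ K * (1 + ‖p‖))
    (l : ℕ) (P P' : (Euc d₁ × Euc d₂) × S) {f : Euc k →L[ℝ] ℝ} (hf : ‖f‖ ≤ 1) :
    sS F K l P f ≤ sS F K l P' f + (K + l + 1) * dist P P' := by
  refine csSup_le ⟨_, ⟨P, rfl⟩⟩ ?_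
  rintro _ ⟨Q, rfl⟩
  dsimp only
  have h1 : sh F Q f - (K + l + 1) * dist P' Q ≤ sS F K l P' f :=
    le_csSup (range_bdd hK hFne hFbd l P' hf) ⟨Q, rfl⟩
  have h2 : dist P' Q ≤ dist P' P + dist P Q := dist_triangle _ _ _
  have hl : (0:ℝ) ≤ (l:ℝ) := Nat.cast_nonneg l
  have hKl : (0:ℝ) ≤ K + l + 1 := by linarith
  have h3 : dist P' P = dist P P' := dist_comm _ _
  nlinarith [mul_le_mul_of_nonneg_left h2 hKl]

lemma sS_anti (hK : 0 < K) (hFne : ∀ p s, (F p s).Nonempty)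
    (hFbd : ∀ p s, ∀ z ∈ F p s, ‖z‖ ≤ K * (1 + ‖p‖))
    (P : (Euc d₁ × Euc d₂) × S) {f : Euc k →L[ℝ] ℝ} (hf : ‖f‖ ≤ 1)
    {l l' : ℕ} (h : l ≤ l') : sS F K l' P f ≤ sS F K l P f := by
  refine csSup_le ⟨_, ⟨P, rfl⟩⟩ ?_
  rintro _ ⟨Q, rfl⟩
  dsimp only
  have h1 : sh F Q f - (K + l + 1) * dist P Q ≤ sS F K l P f :=
    le_csSup (range_bdd hK hFne hFbd l P hf) ⟨Q, rfl⟩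
  have h2 : (l:ℝ) ≤ (l':ℝ) := Nat.cast_le.2 h
  have hd : (0:ℝ) ≤ dist P Q := dist_nonneg
  nlinarith [mul_le_mul_of_nonneg_right (show (K + (l:ℝ) + 1) ≤ K + (l':ℝ) + 1 by linarith) hd]

lemma sH_anti (hK : 0 < K) (hFne : ∀ p s, (F p s).Nonempty)
    (hFbd : ∀ p s, ∀ z ∈ F p s, ‖z‖ ≤ K * (1 + ‖p‖))
    (P : (Euc d₁ × Euc d₂) × S) {f : Euc k →L[ℝ] ℝ} (hf : ‖f‖ ≤ 1)
    {l l' : ℕ} (h : l ≤ l') : sH F K l' P f ≤ sH F K l P f := by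
  have h1 := sS_anti hK hFne hFbd P hf h
  have h2 : (1:ℝ) / (l' + 1) ≤ 1 / (l + 1) := by
    have hc : ((l:ℝ) + 1) ≤ ((l':ℝ) + 1) := by
      have : (l:ℝ) ≤ (l':ℝ) := Nat.cast_le.2 h
      linarith
    exact one_div_le_one_div_of_le (by positivity) hc
  unfold sH; linarith

lemma mem_sG_of_mem (hK : 0 < K) (hFne : ∀ p s, (F p s).Nonempty)
    (hFbd : ∀ p s, ∀ z ∈ F p s, ‖z‖ ≤ K * (1 + ‖p‖))
    (l : ℕ) (P : (Euc d₁ × Euc d₂) × S) {z : Euc k}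
    (hz : z ∈ F P.1 P.2) : z ∈ sG F K l P := by
  intro f hf
  have h1 : f z ≤ sh F P f := le_sh hK hFbd hf hz
  have h2 : sh F P f ≤ sS F K l P f := sh_le_sS hK hFne hFbd l P hf
  have h3 : (0:ℝ) < 1 / ((l:ℝ) + 1) := by positivity
  unfold sH; linarith

lemma norm_le_of_mem_sG (hK : 0 < K) (hFne : ∀ p s, (F p s).Nonempty)
    (hFbd : ∀ p s, ∀ z ∈ F p s, ‖z‖ ≤ K * (1 + ‖p‖))
    {l : ℕ} {P : (Euc d₁ × Euc d₂) × S} {z : Euc k}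
    (hz : z ∈ sG F K l P) : ‖z‖ ≤ K * (1 + ‖P.1‖) + 1 / (l + 1) := by
  rcases eq_or_ne z 0 with rfl | hz0
  · have h3 : (0:ℝ) < 1 / ((l:ℝ) + 1) := by positivity
    have h4 : (0:ℝ) ≤ K * (1 + ‖P.1‖) := mul_nonneg hK.le (by positivity)
    simp only [norm_zero]; linarith
  · obtain ⟨g, hg1, hgz⟩ := exists_dual_vector ℝ z (norm_ne_zero_iff.2 hz0)
    have h1 : g z ≤ sH F K l P g := hz g (le_of_eq hg1)
    have h2 : sS F K l P g ≤ K * (1 + ‖P.1‖) := sS_le hK hFne hFbd l P (le_of_eq hg1)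
    have h3 : g z = ‖z‖ := by exact_mod_cast hgz
    unfold sH at h1; linarith

lemma norm_fst_le (P Q : (Euc d₁ × Euc d₂) × S) : ‖Q.1‖ ≤ ‖P.1‖ + dist P Q := by
  have ha : ‖Q.1‖ ≤ ‖P.1‖ + dist P.1 Q.1 := by
    rw [dist_eq_norm]
    calc ‖Q.1‖ = ‖P.1‖ + (‖Q.1‖ - ‖P.1‖) := by ring
      _ ≤ ‖P.1‖ + ‖Q.1 - P.1‖ := by linarith [norm_sub_norm_le Q.1 P.1]
      _ = ‖P.1‖ + ‖P.1 - Q.1‖ := by rw [norm_sub_rev]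
  have h3 : dist P.1 Q.1 ≤ dist P Q := by
    rw [Prod.dist_eq]; exact le_max_left _ _
  linarith

end SamAux

namespace SamAux2

variable {k : ℕ} {E : Type*} [NormedAddCommGroup E] [NormedSpace ℝ E]

/-- Scaling lemma: if two sets defined by linear inequalities have close defining bounds and the
target set contains a ball of radius ρ around `x₀`, then any point of the first set is close to
the second. -/
lemma scale (φ ψ : (E →L[ℝ] ℝ) → ℝ) (x₀ : E) (ρ η R : ℝ)
    (hρ : 0 < ρ) (hη : 0 ≤ η) (hηρ : η ≤ ρ)
    (hx : ∀ f : E →L[ℝ] ℝ, ‖f‖ ≤ 1 → f x₀ + ρ ≤ ψ f)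
    (hφψ : ∀ f : E →L[ℝ] ℝ, ‖f‖ ≤ 1 → φ f ≤ ψ f + η)
    (c : E) (hc : ∀ f : E →L[ℝ] ℝ, ‖f‖ ≤ 1 → f c ≤ φ f) (hcR : ‖c - x₀‖ ≤ R) :
    ∃ d : E, (∀ f : E →L[ℝ] ℝ, ‖f‖ ≤ 1 → f d ≤ ψ f) ∧ ‖c - d‖ ≤ η * R / ρ := by
  set t : ℝ := 1 - η / ρ with htdef
  have hdiv0 : 0 ≤ η / ρ := div_nonneg hη hρ.le
  have hdiv1 : η / ρ ≤ 1 := (div_le_one hρ).2 hηρ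
  have ht0 : 0 ≤ t := by simp only [htdef]; linarith
  have ht1 : t ≤ 1 := by simp only [htdef]; linarith
  have hkey : (1 - t) * ρ = η := by
    simp only [htdef]; field_simp; ring
  refine ⟨x₀ + t • (c - x₀), ?_, ?_⟩
  · intro f hf
    have e : f (x₀ + t • (c - x₀)) = t * f c + (1 - t) * f x₀ := by
      simp only [map_add, _root_.map_smul, map_sub, smul_eq_mul]; ring
    have h1 : f c ≤ ψ f + η := (hc f hf).trans (hφψ f hf)
    have h2 : f x₀ ≤ ψ f - ρ := by linarith [hx f hf]
    have h1t : t * f c ≤ t * (ψ f + η) := mul_le_mul_of_nonneg_left h1 ht0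
    have h2t : (1 - t) * f x₀ ≤ (1 - t) * (ψ f - ρ) :=
      mul_le_mul_of_nonneg_left h2 (by linarith)
    have hte : t * η ≤ η := by nlinarith
    rw [e]; nlinarith
  · have e : c - (x₀ + t • (c - x₀)) = (1 - t) • (c - x₀) := by
      module
    rw [e, norm_smul, Real.norm_eq_abs, abs_of_nonneg (by linarith : (0:ℝ) ≤ 1 - t)]
    have h1 : (1 - t) * ‖c - x₀‖ ≤ (1 - t) * R :=
      mul_le_mul_of_nonneg_left hcR (by linarith)
    have h2 : (1 - t) = η / ρ := by simp only [htdef]; ring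
    calc (1 - t) * ‖c - x₀‖ ≤ (1 - t) * R := h1
      _ = η / ρ * R := by rw [h2]
      _ = η * R / ρ := by ring

end SamAux2

set_option maxHeartbeats 4000000 in
/-- Continuous embedding: any SAM is approximated from above by a decreasing
sequence of continuous set-valued maps with nonempty convex compact values, with uniformly
bounded linear-growth constants, whose intersection is the SAM itself. -/
theorem sam_continuous_embedding
    (d₁ d₂ k : ℕ) (hd₁ : 0 < d₁) (hd₂ : 0 < d₂) (hk : 0 < k)
    (S : Type) [MetricSpace S] [CompactSpace S]
    (F : (Euc d₁ × Euc d₂) → S → Set (Euc k))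
    (hFne : ∀ p s, (F p s).Nonempty)
    (hFconv : ∀ p s, Convex ℝ (F p s))
    (hFcomp : ∀ p s, IsCompact (F p s))
    (hFgraph : ∀ (p : Euc d₁ × Euc d₂) (s : S) (pn : ℕ → Euc d₁ × Euc d₂) (sn : ℕ → S)
      (zn : ℕ → Euc k) (z : Euc k),
      Tendsto pn atTop (𝓝 p) → Tendsto sn atTop (𝓝 s) →
      (∀ n, zn n ∈ F (pn n) (sn n)) → Tendsto zn atTop (𝓝 z) → z ∈ F p s)
    (K : ℝ) (hK : 0 < K)
    (hFbd : ∀ p s, ∀ z ∈ F p s, ‖z‖ ≤ K * (1 + ‖p‖)) :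
    ∃ (G : ℕ → (Euc d₁ × Euc d₂) → S → Set (Euc k)) (Kl : ℕ → ℝ),
      -- nonempty convex compact values
      (∀ l p s, (G l p s).Nonempty ∧ Convex ℝ (G l p s) ∧ IsCompact (G l p s)) ∧
      -- each G l is a continuous set-valued map (Hausdorff sense)
      (∀ (l : ℕ) (p₀ : Euc d₁ × Euc d₂) (s₀ : S), ∀ ε > (0 : ℝ), ∃ δ > (0 : ℝ),
        ∀ (p : Euc d₁ × Euc d₂) (s : S), ‖p - p₀‖ < δ → dist s s₀ < δ →
          G l p s ⊆ G l p₀ s₀ + closedBall (0 : Euc k) ε ∧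
          G l p₀ s₀ ⊆ G l p s + closedBall (0 : Euc k) ε) ∧
      -- decreasing nesting containing F
      (∀ l p s, F p s ⊆ G (l + 1) p s ∧ G (l + 1) p s ⊆ G l p s) ∧
      -- positive growth constants, uniformly bounded
      (∀ l, 0 < Kl l) ∧ (∃ Ktil : ℝ, ∀ l, Kl l ≤ Ktil) ∧
      (∀ l p s, ∀ z ∈ G l p s, ‖z‖ ≤ Kl l * (1 + ‖p‖)) ∧
      -- intersection recovers F
      (∀ p s, (⋂ l : ℕ, G l p s) = F p s) := by
  classical
  refine ⟨fun l p s => SamAux.sG F K l (p, s), fun _ => K + 1, ?_, ?_, ?_, ?_, ?_, ?_, ?_⟩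
  · -- nonempty, convex, compact values
    beta_reduce
    intro l p s
    obtain ⟨x₀, hx₀⟩ := hFne p s
    refine ⟨⟨x₀, SamAux.mem_sG_of_mem hK hFne hFbd l (p, s) hx₀⟩, ?_, ?_⟩
    · intro x hx y hy a b ha hb hab
      intro f hf
      have e : f (a • x + b • y) = a * f x + b * f y := by
        simp only [map_add, _root_.map_smul, smul_eq_mul]
      have h1 := mul_le_mul_of_nonneg_left (hx f hf) ha
      have h2 := mul_le_mul_of_nonneg_left (hy f hf) hb
      have h3 : a * SamAux.sH F K l (p, s) f + b * SamAux.sH F K l (p, s) f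
          = SamAux.sH F K l (p, s) f := by rw [← add_mul, hab, one_mul]
      rw [e]; linarith
    · rw [isCompact_iff_isClosed_bounded]
      constructor
      · have e : SamAux.sG F K l (p, s) = ⋂ (f : Euc k →L[ℝ] ℝ), ⋂ (_ : ‖f‖ ≤ 1),
            {z : Euc k | f z ≤ SamAux.sH F K l (p, s) f} := by
          ext z; simp [SamAux.sG, Set.mem_iInter]
        rw [e]
        exact isClosed_iInter fun f => isClosed_iInter fun _ =>
          isClosed_le f.continuous continuous_const
      · refine (isBounded_closedBall
          (x := (0 : Euc k)) (r := K * (1 + ‖p‖) + 1 / (l + 1))).subset ?_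
        intro z hz
        have h := SamAux.norm_le_of_mem_sG hK hFne hFbd hz
        rw [mem_closedBall_zero_iff]
        exact h
  · -- continuity
    beta_reduce
    intro l p₀ s₀ ε hε
    obtain ⟨x₀, hx₀⟩ := hFne p₀ s₀
    have hlam0 : (0:ℝ) < K + l + 1 := by
      have : (0:ℝ) ≤ l := Nat.cast_nonneg l; linarith
    set lam : ℝ := K + l + 1 with hlam
    set r : ℝ := 1 / (2 * (l + 1)) with hrdef
    have hr0 : 0 < r := by rw [hrdef]; positivity
    have h2r : 2 * r = 1 / ((l:ℝ) + 1) := by rw [hrdef]; field_simp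
    set R : ℝ := 2 * K * (2 + ‖p₀‖) + 1 with hRdef
    have hR0 : 0 < R := by nlinarith [norm_nonneg p₀]
    set δ : ℝ := min 1 (min (r / lam) (r * ε / (lam * R))) with hδdef
    have hδ0 : 0 < δ := by
      refine lt_min one_pos (lt_min (by positivity) (by positivity))
    refine ⟨δ, hδ0, ?_⟩
    intro p s hp hs
    set P : (Euc d₁ × Euc d₂) × S := (p, s) with hP
    set P₀ : (Euc d₁ × Euc d₂) × S := (p₀, s₀) with hP₀
    have hdist : dist P P₀ ≤ δ := by
      rw [hP, hP₀, Prod.dist_eq]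
      apply max_le
      · rw [dist_eq_norm]; exact hp.le
      · exact hs.le
    have hδ1 : δ ≤ 1 := min_le_left _ _
    have hδr : lam * δ ≤ r := by
      have h1 : δ ≤ r / lam := (min_le_right _ _).trans (min_le_left _ _)
      calc lam * δ ≤ lam * (r / lam) := mul_le_mul_of_nonneg_left h1 hlam0.le
        _ = r := by field_simp
    have hδε : lam * δ * R / r ≤ ε := by
      have h1 : δ ≤ r * ε / (lam * R) := (min_le_right _ _).trans (min_le_right _ _)
      have h2 : lam * δ * R ≤ lam * (r * ε / (lam * R)) * R :=
        mul_le_mul_of_nonneg_right (mul_le_mul_of_nonneg_left h1 hlam0.le) hR0.le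
      have h3 : lam * (r * ε / (lam * R)) * R = r * ε := by field_simp
      rw [div_le_iff₀ hr0]
      calc lam * δ * R ≤ r * ε := h3 ▸ h2
        _ = ε * r := by ring
    have hη0 : (0:ℝ) ≤ lam * δ := mul_nonneg hlam0.le hδ0.le
    -- the ball of radius r around x₀ lies in both regularized sets
    have hxP₀ : ∀ f : Euc k →L[ℝ] ℝ, ‖f‖ ≤ 1 → f x₀ + r ≤ SamAux.sH F K l P₀ f := by
      intro f hf
      have h1 : f x₀ ≤ SamAux.sh F P₀ f := SamAux.le_sh hK hFbd hf hx₀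
      have h2 := SamAux.sh_le_sS hK hFne hFbd l P₀ hf
      unfold SamAux.sH; linarith
    have hlip : ∀ A B : (Euc d₁ × Euc d₂) × S, dist A B ≤ δ →
        ∀ f : Euc k →L[ℝ] ℝ, ‖f‖ ≤ 1 →
        SamAux.sH F K l A f ≤ SamAux.sH F K l B f + lam * δ := by
      intro A B hAB f hf
      have h1 := SamAux.sS_lip hK hFne hFbd l A B hf
      have h2 : (K + (l:ℝ) + 1) * dist A B ≤ (K + (l:ℝ) + 1) * δ :=
        mul_le_mul_of_nonneg_left hAB hlam0.le
      have h3 : lam * δ = (K + (l:ℝ) + 1) * δ := by rw [hlam]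
      unfold SamAux.sH at h1 ⊢
      rw [h3]
      linarith
    have hdist' : dist P₀ P ≤ δ := by rw [dist_comm]; exact hdist
    have hxP : ∀ f : Euc k →L[ℝ] ℝ, ‖f‖ ≤ 1 → f x₀ + r ≤ SamAux.sH F K l P f := by
      intro f hf
      have h1 := hxP₀ f hf
      have h2 := hlip P₀ P hdist' f hf
      have h3 : f x₀ ≤ SamAux.sh F P₀ f := SamAux.le_sh hK hFbd hf hx₀
      have h4 := SamAux.sh_le_sS hK hFne hFbd l P₀ hf
      have h5 : f x₀ + 2 * r ≤ SamAux.sH F K l P₀ f := by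
        unfold SamAux.sH; rw [← h2r] at *; linarith
      linarith
    have hRb : ∀ A : (Euc d₁ × Euc d₂) × S, dist P₀ A ≤ δ →
        ∀ c ∈ SamAux.sG F K l A, ‖c - x₀‖ ≤ R := by
      intro A hA c hc
      have h1 : ‖c‖ ≤ K * (1 + ‖A.1‖) + 1 / (l + 1) :=
        SamAux.norm_le_of_mem_sG hK hFne hFbd hc
      have h2 : ‖A.1‖ ≤ ‖P₀.1‖ + dist P₀ A := SamAux.norm_fst_le P₀ A
      have h3 : ‖x₀‖ ≤ K * (1 + ‖p₀‖) := hFbd p₀ s₀ x₀ hx₀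
      have h4 : 1 / ((l:ℝ) + 1) ≤ 1 := by
        rw [div_le_one (by positivity)]
        have : (0:ℝ) ≤ l := Nat.cast_nonneg l; linarith
      have h5 : ‖P₀.1‖ = ‖p₀‖ := rfl
      calc ‖c - x₀‖ ≤ ‖c‖ + ‖x₀‖ := norm_sub_le _ _
        _ ≤ R := by rw [hRdef]; rw [h5] at h2; nlinarith [norm_nonneg p₀]
    constructor
    · intro c hc
      obtain ⟨e, he, hce⟩ := SamAux2.scale (SamAux.sH F K l P) (SamAux.sH F K l P₀) x₀
        r (lam * δ) R hr0 hη0 hδr hxP₀ (fun f hf => hlip P P₀ hdist f hf) c hc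
        (hRb P hdist' c hc)
      have hnear : ‖c - e‖ ≤ ε := hce.trans hδε
      have hco : c = e + (c - e) := by abel
      rw [hco]
      refine Set.add_mem_add he ?_
      rw [mem_closedBall_zero_iff]
      exact hnear
    · intro c hc
      have hd0 : dist P₀ P₀ ≤ δ := by rw [dist_self]; exact hδ0.le
      obtain ⟨e, he, hce⟩ := SamAux2.scale (SamAux.sH F K l P₀) (SamAux.sH F K l P) x₀
        r (lam * δ) R hr0 hη0 hδr hxP (fun f hf => hlip P₀ P hdist' f hf) c hc
        (hRb P₀ hd0 c hc)
      have hnear : ‖c - e‖ ≤ ε := hce.trans hδε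
      have hco : c = e + (c - e) := by abel
      rw [hco]
      refine Set.add_mem_add he ?_
      rw [mem_closedBall_zero_iff]
      exact hnear
  · -- nesting
    beta_reduce
    intro l p s
    constructor
    · intro z hz
      exact SamAux.mem_sG_of_mem hK hFne hFbd (l + 1) (p, s) hz
    · intro z hz f hf
      exact (hz f hf).trans (SamAux.sH_anti hK hFne hFbd (p, s) hf (Nat.le_succ l))
  · intro l
    show (0:ℝ) < K + 1
    linarith
  · exact ⟨K + 1, fun l => le_rfl⟩
  · -- growth
    beta_reduce
    intro l p s z hz
    have h1 := SamAux.norm_le_of_mem_sG hK hFne hFbd hz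
    have h2 : 1 / ((l:ℝ) + 1) ≤ 1 := by
      rw [div_le_one (by positivity)]
      have : (0:ℝ) ≤ l := Nat.cast_nonneg l; linarith
    have h3 : (0:ℝ) ≤ ‖p‖ := norm_nonneg p
    nlinarith
  · -- intersection recovers F
    beta_reduce
    intro p s
    apply Set.Subset.antisymm
    · intro z hz
      simp only [Set.mem_iInter] at hz
      by_contra hzF
      obtain ⟨f, v, hfv, hvz⟩ :=
        geometric_hahn_banach_closed_point (hFconv p s) (hFcomp p s).isClosed hzF
      obtain ⟨a, ha⟩ := hFne p s
      have hf0 : f ≠ 0 := by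
        rintro rfl
        have h1 := hfv a ha
        simp only [ContinuousLinearMap.zero_apply] at h1 hvz
        linarith
      have hfpos : 0 < ‖f‖ := norm_pos_iff.2 hf0
      obtain ⟨g, hg⟩ : ∃ g : Euc k →L[ℝ] ℝ, g = ‖f‖⁻¹ • f := ⟨_, rfl⟩
      have hgle : ‖g‖ ≤ 1 := by
        rw [hg]
        calc ‖‖f‖⁻¹ • f‖ ≤ ‖‖f‖⁻¹‖ * ‖f‖ := ContinuousLinearMap.opNorm_smul_le _ _
          _ = 1 := by
            rw [Real.norm_eq_abs, abs_inv, abs_norm]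
            field_simp
      have hgapp : ∀ y : Euc k, g y = ‖f‖⁻¹ * f y := by
        intro y; rw [hg]; simp [ContinuousLinearMap.smul_apply, smul_eq_mul]
      have hga : ∀ y ∈ F p s, g y < ‖f‖⁻¹ * v := by
        intro y hy
        rw [hgapp]
        exact mul_lt_mul_of_pos_left (hfv y hy) (inv_pos.2 hfpos)
      have hgz : ‖f‖⁻¹ * v < g z := by
        rw [hgapp]
        exact mul_lt_mul_of_pos_left hvz (inv_pos.2 hfpos)
      obtain ⟨c, hvc, hcz⟩ := exists_between hgz
      have key : ∃ l₀ : ℕ, SamAux.sS F K l₀ (p, s) g ≤ c := by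
        by_contra hno
        push_neg at hno
        simp only [SamAux.sS] at hno
        have hQ : ∀ l : ℕ, ∃ Q : (Euc d₁ × Euc d₂) × S,
            c < SamAux.sh F Q g - (K + l + 1) * dist (p, s) Q := by
          intro l
          have hne : (Set.range fun Q : (Euc d₁ × Euc d₂) × S =>
              SamAux.sh F Q g - (K + l + 1) * dist (p, s) Q).Nonempty :=
            ⟨_, ⟨(p, s), rfl⟩⟩
          obtain ⟨_, ⟨Q, rfl⟩, hlt⟩ := exists_lt_of_lt_csSup hne (hno l)
          exact ⟨Q, hlt⟩
        choose Q hQlt using hQ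
        have hd : ∀ l : ℕ, ((l:ℝ) + 1) * dist (p, s) (Q l) ≤ K * (1 + ‖p‖) - c := by
          intro l
          have h1 : SamAux.sh F (Q l) g ≤ K * (1 + ‖(Q l).1‖) :=
            SamAux.sh_le hK hFne hFbd hgle
          have h2 : ‖(Q l).1‖ ≤ ‖((p, s) : (Euc d₁ × Euc d₂) × S).1‖ + dist (p, s) (Q l) :=
            SamAux.norm_fst_le (p, s) (Q l)
          have h3 := hQlt l
          have h4 : ‖((p, s) : (Euc d₁ × Euc d₂) × S).1‖ = ‖p‖ := rfl
          rw [h4] at h2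
          have h5 : (0:ℝ) ≤ dist (p, s) (Q l) := dist_nonneg
          nlinarith
        have hM0 : 0 ≤ K * (1 + ‖p‖) - c := le_trans (by positivity) (hd 0)
        have hdist0 : Tendsto (fun l : ℕ => dist ((p, s) : (Euc d₁ × Euc d₂) × S) (Q l))
            atTop (𝓝 0) := by
          refine squeeze_zero (g := fun l : ℕ => (K * (1 + ‖p‖) - c) * (1 / ((l:ℝ) + 1)))
            (fun l => dist_nonneg) (fun l => ?_) ?_
          · beta_reduce
            have h1 := hd l
            have h2 : (0:ℝ) < (l:ℝ) + 1 := by positivity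
            rw [mul_one_div, le_div_iff₀ h2]
            linarith [h1]
          · have := tendsto_one_div_add_atTop_nhds_zero_nat.const_mul (K * (1 + ‖p‖) - c)
            simpa using this
        have hQtend : Tendsto Q atTop (𝓝 ((p, s) : (Euc d₁ × Euc d₂) × S)) := by
          rw [tendsto_iff_dist_tendsto_zero]
          simpa [dist_comm] using hdist0
        have hwl : ∀ l : ℕ, ∃ w ∈ F (Q l).1 (Q l).2, SamAux.sh F (Q l) g ≤ g w := by
          intro l
          obtain ⟨w, hw, hmax⟩ := (hFcomp (Q l).1 (Q l).2).exists_isMaxOn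
            (hFne (Q l).1 (Q l).2) g.continuous.continuousOn
          refine ⟨w, hw, csSup_le ((hFne (Q l).1 (Q l).2).image g) ?_⟩
          rintro _ ⟨y, hy, rfl⟩
          exact hmax hy
        choose w hwF hwmax using hwl
        have hwc : ∀ l : ℕ, c < g (w l) := by
          intro l
          have h1 := hQlt l
          have h2 : (0:ℝ) ≤ (K + (l:ℝ) + 1) * dist ((p, s) : (Euc d₁ × Euc d₂) × S) (Q l) := by
            have h2a : (0:ℝ) ≤ (l:ℝ) := Nat.cast_nonneg l
            have h2b : (0:ℝ) ≤ dist ((p, s) : (Euc d₁ × Euc d₂) × S) (Q l) := dist_nonneg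
            nlinarith
          have h3 := hwmax l
          linarith
        have hwbd : ∀ l : ℕ, w l ∈ closedBall (0 : Euc k)
            (K * (1 + ‖p‖ + (K * (1 + ‖p‖) - c))) := by
          intro l
          rw [mem_closedBall_zero_iff]
          have h1 : ‖w l‖ ≤ K * (1 + ‖(Q l).1‖) := hFbd (Q l).1 (Q l).2 _ (hwF l)
          have h2 : ‖(Q l).1‖ ≤ ‖((p, s) : (Euc d₁ × Euc d₂) × S).1‖ + dist (p, s) (Q l) :=
            SamAux.norm_fst_le (p, s) (Q l)
          have h4 : ‖((p, s) : (Euc d₁ × Euc d₂) × S).1‖ = ‖p‖ := rfl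
          rw [h4] at h2
          have h3 : dist ((p, s) : (Euc d₁ × Euc d₂) × S) (Q l) ≤ K * (1 + ‖p‖) - c := by
            have h4a := hd l
            have h5 : (0:ℝ) ≤ dist ((p, s) : (Euc d₁ × Euc d₂) × S) (Q l) := dist_nonneg
            have h6 : (1:ℝ) ≤ (l:ℝ) + 1 := by
              have : (0:ℝ) ≤ (l:ℝ) := Nat.cast_nonneg l
              linarith
            nlinarith
          nlinarith
        obtain ⟨zs, _, φ, hφ, hφtend⟩ := tendsto_subseq_of_bounded
          isBounded_closedBall hwbd
        have hsub : Tendsto φ atTop atTop := hφ.tendsto_atTop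
        have hQφ : Tendsto (fun n => Q (φ n)) atTop
            (𝓝 ((p, s) : (Euc d₁ × Euc d₂) × S)) := hQtend.comp hsub
        have hzsF : zs ∈ F p s := by
          refine hFgraph p s (fun n => (Q (φ n)).1) (fun n => (Q (φ n)).2)
            (fun n => w (φ n)) zs ?_ ?_ (fun n => hwF (φ n)) hφtend
          · exact (continuous_fst.tendsto ((p, s) : (Euc d₁ × Euc d₂) × S)).comp hQφ
          · exact (continuous_snd.tendsto ((p, s) : (Euc d₁ × Euc d₂) × S)).comp hQφ
        have h1 : g zs < ‖f‖⁻¹ * v := hga zs hzsF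
        have h2 : c ≤ g zs := by
          refine ge_of_tendsto ((g.continuous.tendsto zs).comp hφtend) ?_
          exact Eventually.of_forall fun n => (hwc (φ n)).le
        linarith
      obtain ⟨l₀, hl₀⟩ := key
      obtain ⟨n, hn⟩ := exists_nat_one_div_lt (show (0:ℝ) < g z - c by linarith)
      have h1 : SamAux.sS F K (max l₀ n) (p, s) g ≤ c :=
        (SamAux.sS_anti hK hFne hFbd (p, s) hgle (le_max_left l₀ n)).trans hl₀
      have h2 : (1:ℝ) / ((max l₀ n : ℕ) + 1) ≤ 1 / ((n:ℝ) + 1) := by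
        have hc' : ((n:ℝ) + 1) ≤ (((max l₀ n : ℕ) : ℝ) + 1) := by
          have : (n:ℝ) ≤ ((max l₀ n : ℕ) : ℝ) := Nat.cast_le.2 (le_max_right l₀ n)
          linarith
        exact one_div_le_one_div_of_le (by positivity) hc'
      have h3 : g z ≤ SamAux.sH F K (max l₀ n) (p, s) g := hz (max l₀ n) g hgle
      unfold SamAux.sH at h3
      linarith
    · intro z hz
      exact Set.mem_iInter.2 fun l => SamAux.mem_sG_of_mem hK hFne hFbd l (p, s) hz
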